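/- Scaled sub-Gaussian matrix norm bound: Let x_1, ..., x_n be independent mean-zero 1-sub-Gaussian random vectors in R^d and b_1, ..., b_n fixed reals. Then there is an absolute constant C such that for any δ ∈ (0,1/2), with probability at least 1−δ, the spectral norm of the d×n matrix [x_1 ⋯ x_n]·diag(b_1,...,b_n) is at most C√(∑_{i=1}^n b_i² + (d + log(1/δ)) max_i b_i²). -/

import Mathlib

open MeasureTheory ProbabilityTheory Matrix

/-- The spectral norm (ℓ²→ℓ² operator norm) of a real matrix. -/
noncomputable def specNorm {d₁ d₂ : ℕ} (A : Matrix (Fin d₁) (Fin d₂) ℝ) : ℝ :=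
  ‖LinearMap.toContinuousLinearMap (Matrix.toEuclideanLin A)‖

/-- A real random variable `X` has sub-Gaussian constant `b ≥ 0` if all its centered
absolute moments exist and satisfy `E[|X − E[X]|^p]^(1/p) ≤ b √p` for every `p ≥ 1`. -/
def HasSubgaussianConst {Ω : Type*} [MeasurableSpace Ω] (μ : Measure Ω)
    (X : Ω → ℝ) (b : ℝ) : Prop :=
  ∀ p : ℝ, 1 ≤ p →
    Integrable (fun ω => |X ω - ∫ x, X x ∂μ| ^ p) μ ∧
    (∫ ω, |X ω - ∫ x, X x ∂μ| ^ p ∂μ) ^ (1 / p) ≤ b * Real.sqrt p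

open scoped Matrix.Norms.L2Operator ENNReal


lemma sep_card_le (d : ℕ) (s : Finset (EuclideanSpace ℝ (Fin d)))
    (hs : ∀ w ∈ s, ‖w‖ = 1)
    (hsep : ∀ w ∈ s, ∀ w' ∈ s, w ≠ w' → 1/2 ≤ ‖w - w'‖) :
    s.card ≤ 5 ^ d := by
  classical
  have hinj : Function.Injective (fun w : EuclideanSpace ℝ (Fin d) => (2:ℝ) • w) := by
    intro a b h
    simpa using smul_right_injective (EuclideanSpace ℝ (Fin d)) (two_ne_zero) h
  have hcard : (s.image (fun w => (2:ℝ) • w)).card = s.card :=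
    Finset.card_image_of_injective _ hinj
  have := Besicovitch.card_le_of_separated (E := EuclideanSpace ℝ (Fin d))
      (s.image (fun w => (2:ℝ) • w))
      (by
        intro c hc
        rcases Finset.mem_image.1 hc with ⟨w, hw, rfl⟩
        rw [norm_smul, hs w hw]
        simp [Real.norm_ofNat])
      (by
        intro c hc dd hd hne
        rcases Finset.mem_image.1 hc with ⟨w, hw, rfl⟩
        rcases Finset.mem_image.1 hd with ⟨w', hw', rfl⟩
        have hne' : w ≠ w' := fun h => hne (by rw [h])
        have : (2:ℝ) • w - (2:ℝ) • w' = (2:ℝ) • (w - w') := by rw [smul_sub]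
        rw [this, norm_smul]
        have := hsep w hw w' hw' hne'
        rw [Real.norm_ofNat]
        linarith)
  rw [hcard, finrank_euclideanSpace_fin] at this
  exact this

lemma exists_net (d : ℕ) : ∃ N : Finset (EuclideanSpace ℝ (Fin d)),
    N.card ≤ 5 ^ d ∧ (∀ w ∈ N, ‖w‖ = 1) ∧
    ∀ u : EuclideanSpace ℝ (Fin d), ‖u‖ = 1 → ∃ w ∈ N, ‖u - w‖ ≤ 1/2 := by
  classical
  set T : Set ℕ := {k | ∃ s : Finset (EuclideanSpace ℝ (Fin d)),
    (∀ w ∈ s, ‖w‖ = 1) ∧ (∀ w ∈ s, ∀ w' ∈ s, w ≠ w' → 1/2 ≤ ‖w - w'‖) ∧ s.card = k} with hT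
  have h0 : 0 ∈ T := ⟨∅, by simp⟩
  have hbdd : ∀ k ∈ T, k ≤ 5 ^ d := by
    rintro k ⟨s, h1, h2, rfl⟩
    exact sep_card_le d s h1 h2
  have hne : T.Nonempty := ⟨0, h0⟩
  have hbdd' : BddAbove T := ⟨5 ^ d, fun k hk => hbdd k hk⟩
  obtain ⟨N, hN1, hN2, hNcard⟩ := Nat.sSup_mem hne hbdd'
  refine ⟨N, ?_, hN1, ?_⟩
  · rw [hNcard]; exact hbdd _ (Nat.sSup_mem hne hbdd')
  · intro u hu
    by_contra hcon
    push_neg at hcon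
    have huN : u ∉ N := fun h => by
      have := hcon u h
      simp at this
      linarith
    have hins : (insert u N).card = sSup T + 1 := by
      rw [Finset.card_insert_of_notMem huN, hNcard]
    have hmem : sSup T + 1 ∈ T := by
      refine ⟨insert u N, ?_, ?_, hins⟩
      · intro w hw
        rcases Finset.mem_insert.1 hw with rfl | hw
        · exact hu
        · exact hN1 w hw
      · intro w hw w' hw' hne'
        rcases Finset.mem_insert.1 hw with rfl | hw <;>
          rcases Finset.mem_insert.1 hw' with rfl | hw'
        · exact absurd rfl hne'
        · exact le_of_lt (hcon w' hw')
        · have hw2 := Finset.mem_insert.1 hw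
          rcases hw2 with rfl | hw3
          · exact absurd rfl hne'
          · rw [norm_sub_rev]; exact le_of_lt (hcon w hw3)
        · exact hN2 w hw w' hw' hne'
    have := le_csSup hbdd' hmem
    omega


lemma mgf_sq_bound {Ω : Type} [MeasurableSpace Ω] (μ : Measure Ω) [IsProbabilityMeasure μ]
    (Y : Ω → ℝ) (hY : Measurable Y)
    (hmom : ∀ k : ℕ, 1 ≤ k → Integrable (fun ω => |Y ω| ^ (2*k)) μ ∧
      ∫ ω, |Y ω| ^ (2*k) ∂μ ≤ (2*k : ℝ) ^ k)
    {s : ℝ} (hs : 0 ≤ s) (hs2 : 2 * Real.exp 1 * s ≤ 1/2) :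
    Integrable (fun ω => Real.exp (s * Y ω ^ 2)) μ ∧
    ∫ ω, Real.exp (s * Y ω ^ 2) ∂μ ≤ Real.exp (4 * Real.exp 1 * s) := by
  set q : ℝ := 2 * Real.exp 1 * s with hq
  have hqnn : 0 ≤ q := by positivity
  have hqlt : q < 1 := lt_of_le_of_lt hs2 (by norm_num)
  -- pointwise series expansion
  have hexp : ∀ z : ℝ, 0 ≤ z → Real.exp z = ∑' k : ℕ, z ^ k / (Nat.factorial k) := by
    intro z _
    rw [Real.exp_eq_exp_ℝ, NormedSpace.exp_eq_tsum_div]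
  have hptws : ∀ ω, ENNReal.ofReal (Real.exp (s * Y ω ^ 2)) =
      ∑' k : ℕ, ENNReal.ofReal ((s ^ k / (Nat.factorial k)) * |Y ω| ^ (2*k)) := by
    intro ω
    have h0 : 0 ≤ s * Y ω ^ 2 := by positivity
    rw [hexp _ h0, ENNReal.ofReal_tsum_of_nonneg]
    · congr 1
      ext k
      congr 1
      rw [mul_pow, pow_mul, sq_abs]
      ring
    · intro k; positivity
    · exact Real.summable_pow_div_factorial _
  -- bound each term's lintegral
  have hterm : ∀ k : ℕ, (∫⁻ ω, ENNReal.ofReal ((s ^ k / (Nat.factorial k)) * |Y ω| ^ (2*k)) ∂μ)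
      ≤ ENNReal.ofReal (q ^ k) := by
    intro k
    have hcnn : (0:ℝ) ≤ s ^ k / (Nat.factorial k) := by positivity
    have hsplit : ∀ ω, ENNReal.ofReal ((s ^ k / (Nat.factorial k)) * |Y ω| ^ (2*k)) =
        ENNReal.ofReal (s ^ k / (Nat.factorial k)) * ENNReal.ofReal (|Y ω| ^ (2*k)) := by
      intro ω; rw [ENNReal.ofReal_mul hcnn]
    simp_rw [hsplit]
    rw [lintegral_const_mul' _ _ ENNReal.ofReal_ne_top]
    rcases Nat.eq_zero_or_pos k with rfl | hk
    · simp
    · have hmomk := hmom k hk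
      have hint : (∫⁻ ω, ENNReal.ofReal (|Y ω| ^ (2*k)) ∂μ)
          = ENNReal.ofReal (∫ ω, |Y ω| ^ (2*k) ∂μ) := by
        rw [← ofReal_integral_eq_lintegral_ofReal hmomk.1]
        exact Filter.Eventually.of_forall fun ω => by positivity
      rw [hint, ← ENNReal.ofReal_mul hcnn]
      apply ENNReal.ofReal_le_ofReal
      have hIk : (∫ ω, |Y ω| ^ (2*k) ∂μ) ≤ (2*k : ℝ) ^ k := hmomk.2
      have hI0 : (0:ℝ) ≤ ∫ ω, |Y ω| ^ (2*k) ∂μ :=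
        integral_nonneg fun ω => by positivity
      calc s ^ k / (Nat.factorial k) * ∫ ω, |Y ω| ^ (2*k) ∂μ
          ≤ s ^ k / (Nat.factorial k) * (2*k : ℝ) ^ k := by
            apply mul_le_mul_of_nonneg_left hIk hcnn
        _ = (2*s) ^ k * ((k:ℝ) ^ k / (Nat.factorial k)) := by
            rw [mul_pow, mul_pow]; ring
        _ ≤ (2*s) ^ k * Real.exp (k) := by
            apply mul_le_mul_of_nonneg_left _ (by positivity)
            exact Real.pow_div_factorial_le_exp (k:ℝ) (Nat.cast_nonneg k) k
        _ = q ^ k := by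
            have hek : Real.exp (k:ℝ) = Real.exp 1 ^ k := by
              rw [← Real.exp_nat_mul]; norm_num
            rw [hq, hek, mul_pow, mul_pow]
            ring
  -- total lintegral bound
  have hlint : (∫⁻ ω, ENNReal.ofReal (Real.exp (s * Y ω ^ 2)) ∂μ)
      ≤ ENNReal.ofReal ((1 - q)⁻¹) := by
    calc (∫⁻ ω, ENNReal.ofReal (Real.exp (s * Y ω ^ 2)) ∂μ)
        = ∑' k : ℕ, ∫⁻ ω, ENNReal.ofReal ((s ^ k / (Nat.factorial k)) * |Y ω| ^ (2*k)) ∂μ := by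
          simp_rw [hptws]
          rw [lintegral_tsum]
          intro k
          apply ENNReal.measurable_ofReal.comp_aemeasurable
          exact (((hY.abs.pow_const _).const_mul _)).aemeasurable
      _ ≤ ∑' k : ℕ, ENNReal.ofReal (q ^ k) := ENNReal.tsum_le_tsum hterm
      _ = ENNReal.ofReal (∑' k : ℕ, q ^ k) := by
          rw [ENNReal.ofReal_tsum_of_nonneg (fun k => by positivity)
            (summable_geometric_of_lt_one hqnn hqlt)]
      _ = ENNReal.ofReal ((1 - q)⁻¹) := by rw [tsum_geometric_of_lt_one hqnn hqlt]
  have hlt : (∫⁻ ω, ENNReal.ofReal (Real.exp (s * Y ω ^ 2)) ∂μ) < ⊤ :=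
    lt_of_le_of_lt hlint ENNReal.ofReal_lt_top
  have hmeas : Measurable fun ω => Real.exp (s * Y ω ^ 2) :=
    (((hY.pow_const 2).const_mul s)).exp
  have hintg : Integrable (fun ω => Real.exp (s * Y ω ^ 2)) μ := by
    refine ⟨hmeas.aestronglyMeasurable, ?_⟩
    rw [hasFiniteIntegral_iff_norm]
    convert hlt using 1
    congr 1
    ext ω
    rw [Real.norm_eq_abs, abs_of_nonneg (Real.exp_pos _).le]
  refine ⟨hintg, ?_⟩
  have heq : ∫ ω, Real.exp (s * Y ω ^ 2) ∂μ
      = (∫⁻ ω, ENNReal.ofReal (Real.exp (s * Y ω ^ 2)) ∂μ).toReal := by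
    rw [integral_eq_lintegral_of_nonneg_ae
      (Filter.Eventually.of_forall fun ω => (Real.exp_pos _).le) hmeas.aestronglyMeasurable]
  rw [heq]
  have h1 : ((∫⁻ ω, ENNReal.ofReal (Real.exp (s * Y ω ^ 2)) ∂μ)).toReal ≤ (1 - q)⁻¹ := by
    rw [← ENNReal.toReal_ofReal (inv_nonneg.mpr (by linarith : (0:ℝ) ≤ 1-q))]
    exact ENNReal.toReal_mono ENNReal.ofReal_ne_top hlint
  refine h1.trans ?_
  -- (1-q)⁻¹ ≤ exp (2q),  0 ≤ q ≤ 1/2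
  have h2 : (1:ℝ) + 2*q ≤ Real.exp (2*q) := by
    have := Real.add_one_le_exp (2*q)
    linarith
  have h3 : (1 - q) * (1 + 2*q) ≥ 1 := by nlinarith
  have h4 : (1 - q)⁻¹ ≤ 1 + 2*q := by
    rw [inv_le_iff_one_le_mul₀ (by linarith)]
    nlinarith
  have : 4 * Real.exp 1 * s = 2 * q := by rw [hq]; ring
  rw [this]
  linarith

lemma chernoff_sum_sq {Ω : Type} [MeasurableSpace Ω] (μ : Measure Ω) [IsProbabilityMeasure μ]
    {n : ℕ} (Y : Fin n → Ω → ℝ) (hY : ∀ j, Measurable (Y j))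
    (hind : iIndepFun Y μ)
    (hmom : ∀ j, ∀ k : ℕ, 1 ≤ k → Integrable (fun ω => |Y j ω| ^ (2*k)) μ ∧
      ∫ ω, |Y j ω| ^ (2*k) ∂μ ≤ (2*k : ℝ) ^ k)
    (c : Fin n → ℝ) (hc0 : ∀ j, 0 ≤ c j) {M : ℝ} (hM : 0 < M) (hcM : ∀ j, c j ≤ M)
    (K : ℝ) (hK : 0 ≤ K) :
    (μ {ω | 4 * Real.exp 1 * ((∑ j, c j) + K * M) ≤ ∑ j, c j * Y j ω ^ 2}).toReal
      ≤ Real.exp (-K) := by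
  set e1 := Real.exp 1 with he1
  have he1pos : 0 < e1 := Real.exp_pos 1
  set l : ℝ := (4 * e1 * M)⁻¹ with hl
  have hlpos : 0 < l := by positivity
  set Z : Fin n → Ω → ℝ := fun j ω => (l * c j) * Y j ω ^ 2 with hZ
  have hsj : ∀ j, 0 ≤ l * c j := fun j => mul_nonneg hlpos.le (hc0 j)
  have hsj2 : ∀ j, 2 * e1 * (l * c j) ≤ 1/2 := by
    intro j
    have : 2 * e1 * (l * c j) = c j / (2 * M) := by
      rw [hl]; field_simp; ring
    rw [this, div_le_iff₀ (by positivity)]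
    have := hcM j
    linarith
  have hmgf := fun j => mgf_sq_bound μ (Y j) (hY j) (hmom j) (hsj j) (hsj2 j)
  have hZmeas : ∀ j, Measurable (Z j) := fun j => ((hY j).pow_const 2).const_mul _
  -- independence of Z
  have hZind : iIndepFun Z μ := by
    have := hind.comp (fun j (y : ℝ) => (l * c j) * y ^ 2)
      (fun j => (measurable_id.pow_const 2).const_mul _)
    exact this
  -- integrability of per-term exponentials
  have hZint : ∀ j, Integrable (fun ω => Real.exp (1 * Z j ω)) μ := by
    intro j
    simpa [hZ, one_mul, mul_assoc] using (hmgf j).1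
  set B := ∑ j, c j with hB
  have hBnn : 0 ≤ B := Finset.sum_nonneg fun j _ => hc0 j
  set t₀ : ℝ := 4 * e1 * (B + K * M) with ht₀
  -- event equality
  have hset : {ω | t₀ ≤ ∑ j, c j * Y j ω ^ 2} = {ω | l * t₀ ≤ (∑ j, Z j) ω} := by
    ext ω
    simp only [Set.mem_setOf_eq, Finset.sum_apply]
    have hsum : ∑ j, Z j ω = l * ∑ j, c j * Y j ω ^ 2 := by
      rw [Finset.mul_sum]
      apply Finset.sum_congr rfl
      intro j _
      rw [hZ]; ring
    rw [hsum]
    exact (mul_le_mul_iff_right₀ hlpos).symm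
  have hintsum : Integrable (fun ω => Real.exp (1 * (∑ j, Z j) ω)) μ :=
    iIndepFun.integrable_exp_mul_sum hZind hZmeas (fun j _ => hZint j)
  have hchern := measure_ge_le_exp_mul_mgf (X := ∑ j, Z j) (μ := μ) (t := 1)
    (l * t₀) zero_le_one hintsum
  rw [hset]
  refine hchern.trans ?_
  have hmgfsum : mgf (∑ j, Z j) μ 1 = ∏ j, mgf (Z j) μ 1 :=
    iIndepFun.mgf_sum hZind hZmeas Finset.univ
  have hmgfj : ∀ j, mgf (Z j) μ 1 ≤ Real.exp (c j / M) := by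
    intro j
    have h1 : mgf (Z j) μ 1 = ∫ ω, Real.exp ((l * c j) * Y j ω ^ 2) ∂μ := by
      unfold mgf
      congr 1
      ext ω
      rw [hZ]; ring_nf
    rw [h1]
    refine (hmgf j).2.trans ?_
    apply Real.exp_le_exp.2
    rw [hl]
    rw [(by field_simp : 4 * e1 * ((4 * e1 * M)⁻¹ * c j) = c j / M)]
  have hprod : ∏ j, mgf (Z j) μ 1 ≤ ∏ j : Fin n, Real.exp (c j / M) := by
    apply Finset.prod_le_prod (fun j _ => mgf_nonneg) (fun j _ => hmgfj j)
  have hprodexp : ∏ j : Fin n, Real.exp (c j / M) = Real.exp (B / M) := by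
    rw [← Real.exp_sum, hB, Finset.sum_div]
  have hlt₀ : l * t₀ = B / M + K := by
    rw [hl, ht₀]; field_simp
  calc Real.exp (-1 * (l * t₀)) * mgf (∑ j, Z j) μ 1
      ≤ Real.exp (-1 * (l * t₀)) * Real.exp (B / M) := by
        apply mul_le_mul_of_nonneg_left _ (Real.exp_pos _).le
        rw [hmgfsum]
        exact hprod.trans (le_of_eq hprodexp)
    _ = Real.exp (-K) := by
        rw [← Real.exp_add, hlt₀]; ring_nf

lemma subg_moments {Ω : Type} [MeasurableSpace Ω] (μ : Measure Ω) [IsProbabilityMeasure μ]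
    {d : ℕ} (X : Ω → Fin d → ℝ) (hX : Measurable X)
    (hmean : ∀ a, ∫ ω, X ω a ∂μ = 0)
    (hsub : ∀ u : Fin d → ℝ, (∑ a, u a ^ 2) = 1 →
      HasSubgaussianConst μ (fun ω => ∑ a, u a * X ω a) 1)
    (u : Fin d → ℝ) (hu : ∑ a, u a ^ 2 = 1) :
    ∀ k : ℕ, 1 ≤ k → Integrable (fun ω => |∑ a, u a * X ω a| ^ (2*k)) μ ∧
      ∫ ω, |∑ a, u a * X ω a| ^ (2*k) ∂μ ≤ (2*k : ℝ) ^ k := by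
  classical
  set Y : Ω → ℝ := fun ω => ∑ a, u a * X ω a with hYdef
  -- Step 1: each coordinate is integrable
  have hcoord : ∀ a : Fin d, Integrable (fun ω => X ω a) μ := by
    intro a
    set e : Fin d → ℝ := fun j => if j = a then 1 else 0 with he
    have hsum : ∑ j, e j ^ 2 = 1 := by
      rw [he]; simp
    have hfun : (fun ω => ∑ j, e j * X ω j) = fun ω => X ω a := by
      funext ω
      rw [he]; simp
    have h := hsub e hsum
    rw [hfun] at h
    have h1 := h 1 le_rfl
    simp only [Real.rpow_one] at h1
    have habs : Integrable (fun ω => |X ω a - ∫ x, X x a ∂μ|) μ := h1.1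
    have hmeasa : Measurable fun ω => X ω a - ∫ x, X x a ∂μ :=
      (measurable_pi_apply a |>.comp hX).sub_const _
    have hsubint : Integrable (fun ω => X ω a - ∫ x, X x a ∂μ) μ := by
      rwa [← integrable_norm_iff hmeasa.aestronglyMeasurable]
    have h2 := hsubint.add (integrable_const (∫ x, X x a ∂μ))
    have h3 : (fun ω => (X ω a - ∫ x, X x a ∂μ) + ∫ x, X x a ∂μ) = fun ω => X ω a := by
      funext ω; ring
    exact h2.congr (Filter.Eventually.of_forall fun ω => by simp)
  -- Step 2: ∫ Y = 0
  have hYint : ∫ ω, Y ω ∂μ = 0 := by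
    rw [hYdef]
    rw [integral_finset_sum _ (fun a _ => (hcoord a).const_mul (u a))]
    simp [integral_const_mul, hmean]
  -- Step 3: moments
  intro k hk
  have hp : (1:ℝ) ≤ (2*k : ℕ) := by
    have : (1:ℕ) ≤ 2*k := by omega
    exact_mod_cast this
  have h := hsub u hu ((2*k : ℕ) : ℝ) hp
  rw [show (∫ x, Y x ∂μ) = 0 from hYint] at h
  simp only [sub_zero] at h
  have hrw : (fun ω => |Y ω| ^ (((2*k : ℕ):ℝ))) = fun ω => |Y ω| ^ (2*k) := by
    funext ω
    rw [Real.rpow_natCast]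
  rw [hrw] at h
  refine ⟨h.1, ?_⟩
  have h2 := h.2
  have hInn : (0:ℝ) ≤ ∫ ω, |Y ω| ^ (2*k) ∂μ := integral_nonneg fun ω => by positivity
  have hp0 : ((2*k : ℕ):ℝ) ≠ 0 := by positivity
  have h3 : ((∫ ω, |Y ω| ^ (2*k) ∂μ) ^ ((1:ℝ) / ((2*k:ℕ):ℝ))) ^ (((2*k:ℕ)):ℝ)
      ≤ (1 * Real.sqrt ((2*k:ℕ):ℝ)) ^ (((2*k:ℕ)):ℝ) :=
    Real.rpow_le_rpow (Real.rpow_nonneg hInn _) h2 (by positivity)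
  rw [← Real.rpow_mul hInn, one_div, inv_mul_cancel₀ hp0, Real.rpow_one] at h3
  refine h3.trans (le_of_eq ?_)
  rw [one_mul, Real.rpow_natCast, pow_mul,
    Real.sq_sqrt (by positivity : (0:ℝ) ≤ ((2*k:ℕ):ℝ))]
  push_cast
  ring

lemma specNorm_eq_transpose {d n : ℕ} (A : Matrix (Fin d) (Fin n) ℝ) :
    specNorm A = ‖LinearMap.toContinuousLinearMap (Matrix.toEuclideanLin Aᵀ)‖ := by
  have h1 : specNorm A = ‖A‖ := rfl
  have h2 : ‖Aᵀ‖ = ‖LinearMap.toContinuousLinearMap (Matrix.toEuclideanLin Aᵀ)‖ := rfl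
  rw [h1, ← h2, ← conjTranspose_eq_transpose_of_trivial A, l2_opNorm_conjTranspose]

lemma euclidean_apply_norm {n d : ℕ} (Mx : Matrix (Fin n) (Fin d) ℝ)
    (w : EuclideanSpace ℝ (Fin d)) :
    ‖LinearMap.toContinuousLinearMap (Matrix.toEuclideanLin Mx) w‖
      = Real.sqrt (∑ j, (∑ a, Mx j a * w a) ^ 2) := by
  rw [LinearMap.coe_toContinuousLinearMap']
  rw [EuclideanSpace.norm_eq]
  congr 1
  apply Finset.sum_congr rfl
  intro j _
  rw [toEuclideanLin_apply]
  rw [Real.norm_eq_abs, sq_abs]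
  congr 1


set_option maxHeartbeats 1000000 in
/-- Scaled sub-Gaussian matrix norm bound. Let `x_1, ..., x_n` be independent
mean-zero `1`-sub-Gaussian random vectors in `ℝ^d` and `b_1, ..., b_n` fixed reals. Then
there is an absolute constant `C` such that for any `δ ∈ (0,1/2)`, with probability at
least `1 − δ`, the spectral norm of the `d×n` matrix `[x_1 ⋯ x_n] diag(b_1,...,b_n)`
(whose `j`-th column is `b_j x_j`) is at most
`C √(∑ b_i² + (d + log(1/δ)) max_i b_i²)`. -/
theorem stmt14 :
    ∃ C : ℝ, 0 < C ∧
      ∀ (d n : ℕ) (Ω : Type) (_ : MeasurableSpace Ω) (μ : Measure Ω),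
        IsProbabilityMeasure μ →
        ∀ (x : Fin n → Ω → Fin d → ℝ) (b : Fin n → ℝ),
          (∀ i, Measurable (x i)) →
          iIndepFun x μ →
          (∀ i j, (∫ ω, x i ω j ∂μ) = 0) →
          (∀ i (u : Fin d → ℝ), (∑ j, (u j) ^ 2) = 1 →
            HasSubgaussianConst μ (fun ω => ∑ j, u j * x i ω j) 1) →
          ∀ δ : ℝ, 0 < δ → δ < 1 / 2 →
            1 - δ ≤ (μ {ω | specNorm (Matrix.of fun (a : Fin d) (j : Fin n) => x j ω a * b j)
              ≤ C * Real.sqrt ((∑ i, (b i) ^ 2)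
                  + (d + Real.log (1 / δ)) * (⨆ i, (b i) ^ 2))}).toReal := by
  refine ⟨10, by norm_num, ?_⟩
  intro d n Ω mΩ μ hprob x b hmeas hindep hmean hsubg δ hδ0 hδhalf
  set L : ℝ := Real.log (1 / δ) with hL
  have hLpos : 0 < L := Real.log_pos (by rw [lt_div_iff₀ hδ0]; linarith)
  set M : ℝ := ⨆ i, (b i) ^ 2 with hM
  have hMnn : 0 ≤ M := Real.iSup_nonneg (fun i => sq_nonneg _)
  set B : ℝ := ∑ i, (b i) ^ 2 with hB
  have hBnn : 0 ≤ B := Finset.sum_nonneg fun i _ => sq_nonneg _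
  have hbM : ∀ j, (b j) ^ 2 ≤ M := by
    intro j
    rw [hM]
    exact le_ciSup (f := fun i => (b i) ^ 2) (Finite.bddAbove_range _) j
  rcases eq_or_lt_of_le hMnn with hM0 | hMpos
  · -- degenerate case: all b = 0
    have hb0 : ∀ j, b j = 0 := by
      intro j
      have := hbM j
      rw [← hM0] at this
      nlinarith [sq_nonneg (b j)]
    have hset : {ω | specNorm (Matrix.of fun (a : Fin d) (j : Fin n) => x j ω a * b j)
        ≤ 10 * Real.sqrt (B + ((d:ℝ) + L) * M)} = Set.univ := by
      apply Set.eq_univ_iff_forall.2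
      intro ω
      have hzero : (Matrix.of fun (a : Fin d) (j : Fin n) => x j ω a * b j) = 0 := by
        ext a j
        simp [hb0 j]
      simp only [Set.mem_setOf_eq, hzero]
      have : specNorm (0 : Matrix (Fin d) (Fin n) ℝ) = 0 := by
        unfold specNorm
        rw [map_zero, map_zero, norm_zero]
      rw [this]
      positivity
    rw [hset]
    simp only [measure_univ, ENNReal.toReal_one]
    linarith
  · -- main case M > 0
    set K : ℝ := 2 * (d:ℝ) + L with hK
    have hKpos : 0 < K := by positivity
    set t₀ : ℝ := 4 * Real.exp 1 * (B + K * M) with ht₀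
    obtain ⟨N, hNcard, hNsphere, hNnet⟩ := exists_net d
    -- per-direction linear statistics
    set Y : EuclideanSpace ℝ (Fin d) → Fin n → Ω → ℝ :=
      fun w j ω => ∑ a, w a * x j ω a with hY
    have hYmeas : ∀ w j, Measurable (Y w j) := by
      intro w j
      apply Finset.measurable_sum
      intro a _
      exact ((measurable_pi_apply a).comp (hmeas j)).const_mul (w a)
    set S : EuclideanSpace ℝ (Fin d) → Ω → ℝ :=
      fun w ω => ∑ j, (b j) ^ 2 * (Y w j ω) ^ 2 with hS
    have hSmeas : ∀ w, Measurable (S w) := by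
      intro w
      apply Finset.measurable_sum
      intro j _
      exact ((hYmeas w j).pow_const 2).const_mul _
    -- Chernoff bound per net point
    have hchern : ∀ w ∈ N, (μ {ω | t₀ ≤ S w ω}).toReal ≤ Real.exp (-K) := by
      intro w hw
      have hw1 : ‖w‖ = 1 := hNsphere w hw
      have hw2 : ∑ a, (w a) ^ 2 = 1 := by
        rw [EuclideanSpace.norm_eq] at hw1
        have := Real.sqrt_eq_one.1 hw1
        rw [← this]
        apply Finset.sum_congr rfl
        intro a _
        rw [Real.norm_eq_abs, sq_abs]
      have hYind : iIndepFun (Y w) μ := by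
        have := hindep.comp (fun j (v : Fin d → ℝ) => ∑ a, w a * v a)
          (fun j => Finset.measurable_sum _ fun a _ => by fun_prop)
        exact this
      have hmom : ∀ j, ∀ k : ℕ, 1 ≤ k →
          Integrable (fun ω => |Y w j ω| ^ (2*k)) μ ∧
          ∫ ω, |Y w j ω| ^ (2*k) ∂μ ≤ (2*k : ℝ) ^ k := by
        intro j
        exact subg_moments μ (x j) (hmeas j) (hmean j) (fun u hu => hsubg j u hu) w hw2
      exact chernoff_sum_sq μ (Y w) (fun j => hYmeas w j) hYind hmom
        (fun j => (b j) ^ 2) (fun j => sq_nonneg _) hMpos hbM K hKpos.le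
    -- union bound
    set Bad : Set Ω := ⋃ w ∈ N, {ω | t₀ ≤ S w ω} with hBad
    have hBadMeas : MeasurableSet Bad :=
      MeasurableSet.biUnion N.countable_toSet
        (fun w _ => measurableSet_le measurable_const (hSmeas w))
    have hexpK : Real.exp (-K) = Real.exp (-(2*(d:ℝ))) * δ := by
      rw [hK, neg_add, Real.exp_add]
      congr 1
      rw [hL, Real.log_div one_ne_zero (ne_of_gt hδ0), Real.log_one, zero_sub, neg_neg,
        Real.exp_log hδ0]
    have hrealbound : (N.card : ℝ) * Real.exp (-K) ≤ δ := by
      rw [hexpK]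
      have h5 : (N.card : ℝ) ≤ (5:ℝ) ^ d := by
        have := hNcard
        exact_mod_cast Nat.cast_le.2 this
      have hpow : (5:ℝ) ^ d * Real.exp (-(2*(d:ℝ))) ≤ 1 := by
        have hexp2 : Real.exp (-(2*(d:ℝ))) = (Real.exp (-2)) ^ d := by
          rw [← Real.exp_nat_mul]
          congr 1
          ring
        rw [hexp2, ← mul_pow]
        apply pow_le_one₀ (by positivity)
        rw [← Real.exp_log (by norm_num : (0:ℝ) < 5), ← Real.exp_add]
        have hlog5 : Real.log 5 ≤ 2 := by
          rw [← Real.exp_le_exp, Real.exp_log (by norm_num : (0:ℝ) < 5)]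
          have h1 := Real.exp_one_gt_d9
          have : Real.exp 2 = Real.exp 1 * Real.exp 1 := by
            rw [← Real.exp_add]; norm_num
          nlinarith
        calc Real.exp (Real.log 5 + -2) ≤ Real.exp 0 := by
              apply Real.exp_le_exp.2; linarith
          _ = 1 := Real.exp_zero
      calc (N.card : ℝ) * (Real.exp (-(2*(d:ℝ))) * δ)
          ≤ (5:ℝ) ^ d * (Real.exp (-(2*(d:ℝ))) * δ) := by
            apply mul_le_mul_of_nonneg_right h5 (by positivity)
        _ = ((5:ℝ) ^ d * Real.exp (-(2*(d:ℝ)))) * δ := by ring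
        _ ≤ 1 * δ := by apply mul_le_mul_of_nonneg_right hpow hδ0.le
        _ = δ := one_mul δ
    have hBadBound : μ Bad ≤ ENNReal.ofReal δ := by
      calc μ Bad ≤ ∑ w ∈ N, μ {ω | t₀ ≤ S w ω} := measure_biUnion_finset_le N _
        _ ≤ ∑ w ∈ N, ENNReal.ofReal (Real.exp (-K)) := by
            apply Finset.sum_le_sum
            intro w hw
            rw [← ENNReal.ofReal_toReal (measure_ne_top μ _)]
            exact ENNReal.ofReal_le_ofReal (hchern w hw)
        _ = (N.card : ℝ≥0∞) * ENNReal.ofReal (Real.exp (-K)) := by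
            rw [Finset.sum_const, nsmul_eq_mul]
        _ = ENNReal.ofReal ((N.card : ℝ) * Real.exp (-K)) := by
            rw [ENNReal.ofReal_mul (by positivity), ENNReal.ofReal_natCast]
        _ ≤ ENNReal.ofReal δ := ENNReal.ofReal_le_ofReal hrealbound
    -- good event implies norm bound
    have hincl : Badᶜ ⊆ {ω | specNorm (Matrix.of fun (a : Fin d) (j : Fin n) => x j ω a * b j)
        ≤ 10 * Real.sqrt (B + ((d:ℝ) + L) * M)} := by
      intro ω hω
      have hgood : ∀ w ∈ N, S w ω < t₀ := by
        intro w hw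
        by_contra hcon
        push_neg at hcon
        exact hω (Set.mem_biUnion hw hcon)
      set A : Matrix (Fin d) (Fin n) ℝ := Matrix.of fun (a : Fin d) (j : Fin n) => x j ω a * b j
        with hA
      set T := LinearMap.toContinuousLinearMap (Matrix.toEuclideanLin Aᵀ) with hT
      have hspec : specNorm A = ‖T‖ := specNorm_eq_transpose A
      have hTnorm : ∀ w : EuclideanSpace ℝ (Fin d), ‖T w‖ = Real.sqrt (S w ω) := by
        intro w
        rw [hT, euclidean_apply_norm]
        congr 1
        rw [hS]
        apply Finset.sum_congr rfl
        intro j _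
        have : ∑ a, Aᵀ j a * w a = b j * ∑ a, w a * x j ω a := by
          rw [Finset.mul_sum]
          apply Finset.sum_congr rfl
          intro a _
          rw [hA]
          simp only [Matrix.transpose_apply, Matrix.of_apply]
          ring
        rw [this, hY]
        ring
      have hTw : ∀ w ∈ N, ‖T w‖ ≤ Real.sqrt t₀ := by
        intro w hw
        rw [hTnorm w]
        apply Real.sqrt_le_sqrt (hgood w hw).le
      have hTop : ‖T‖ ≤ Real.sqrt t₀ + ‖T‖ / 2 := by
        apply ContinuousLinearMap.opNorm_le_of_unit_norm
        · have := norm_nonneg T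
          positivity
        · intro u hu
          obtain ⟨w, hwN, hw⟩ := hNnet u hu
          calc ‖T u‖ = ‖T w + (T u - T w)‖ := by rw [add_sub_cancel]
            _ ≤ ‖T w‖ + ‖T u - T w‖ := norm_add_le _ _
            _ ≤ Real.sqrt t₀ + ‖T‖ * ‖u - w‖ := by
                apply add_le_add (hTw w hwN)
                rw [← map_sub]
                exact T.le_opNorm _
            _ ≤ Real.sqrt t₀ + ‖T‖ / 2 := by
                have h1 : ‖T‖ * ‖u - w‖ ≤ ‖T‖ * (1/2) :=
                  mul_le_mul_of_nonneg_left hw (norm_nonneg T)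
                linarith
      have hTle : ‖T‖ ≤ 2 * Real.sqrt t₀ := by linarith
      have hnum : 2 * Real.sqrt t₀ ≤ 10 * Real.sqrt (B + ((d:ℝ) + L) * M) := by
        have hR : (0:ℝ) ≤ B + ((d:ℝ) + L) * M := by positivity
        have ht₀le : t₀ ≤ 25 * (B + ((d:ℝ) + L) * M) := by
          have he' : (4:ℝ) * Real.exp 1 ≤ 12 := by
            have := Real.exp_one_lt_d9
            linarith
          have hd : (0:ℝ) ≤ (d:ℝ) := Nat.cast_nonneg d
          have hBKM : 0 ≤ B + K * M := by positivity
          have hstep : B + K * M ≤ 2 * (B + ((d:ℝ) + L) * M) := by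
            rw [hK]
            have h1 : 0 ≤ L * M := mul_nonneg hLpos.le hMnn
            nlinarith
          calc t₀ = (4 * Real.exp 1) * (B + K * M) := by rw [ht₀]
            _ ≤ 12 * (B + K * M) := mul_le_mul_of_nonneg_right he' hBKM
            _ ≤ 12 * (2 * (B + ((d:ℝ) + L) * M)) := by
                apply mul_le_mul_of_nonneg_left hstep (by norm_num)
            _ ≤ 25 * (B + ((d:ℝ) + L) * M) := by linarith
        calc 2 * Real.sqrt t₀ ≤ 2 * Real.sqrt (25 * (B + ((d:ℝ) + L) * M)) := by
              apply mul_le_mul_of_nonneg_left (Real.sqrt_le_sqrt ht₀le) (by norm_num)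
          _ = 10 * Real.sqrt (B + ((d:ℝ) + L) * M) := by
              rw [Real.sqrt_mul (by norm_num : (0:ℝ) ≤ 25)]
              rw [show (25:ℝ) = 5 ^ 2 by norm_num, Real.sqrt_sq (by norm_num : (0:ℝ) ≤ 5)]
              ring
      show specNorm A ≤ 10 * Real.sqrt (B + ((d:ℝ) + L) * M)
      rw [hspec]
      linarith
    -- conclude
    have hμtarget := measure_mono (μ := μ) hincl
    have hcompl : μ Badᶜ = 1 - μ Bad := by
      rw [measure_compl hBadMeas (measure_ne_top μ _), measure_univ]
    have hBadle1 : μ Bad ≤ 1 := prob_le_one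
    have htoReal : (μ Badᶜ).toReal = 1 - (μ Bad).toReal := by
      rw [hcompl, ENNReal.toReal_sub_of_le hBadle1 ENNReal.one_ne_top, ENNReal.toReal_one]
    have hBadReal : (μ Bad).toReal ≤ δ := by
      have := ENNReal.toReal_mono ENNReal.ofReal_ne_top hBadBound
      rwa [ENNReal.toReal_ofReal hδ0.le] at this
    have hfinal : 1 - δ ≤ (μ Badᶜ).toReal := by
      rw [htoReal]; linarith
    refine hfinal.trans ?_
    exact ENNReal.toReal_mono (measure_ne_top μ _) hμtarget
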